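/- Renewal-reward theorem (expectation form): Let Z₀, Z₁, … be i.i.d. positive random variables with 0 < E[Z₀] < ∞ and R₀, R₁, … i.i.d. rewards with E[|R₀|] < ∞, with (Zᵢ) independent of (Rᵢ). Define Q_t = #{i ≥ 0 : Z₀ + … + Z_i ≤ t} and S_t = Σ_{i=0}^{Q_t} R_i. Then lim_{T→∞} E[S_T]/T = E[R₀]/E[Z₀]. -/

import Mathlib

open MeasureTheory ProbabilityTheory Filter

section RRAux

lemma rr_strictMono {z : ℕ → ℝ} (hz : ∀ k, 0 < z k) :
    StrictMono (fun n => ∑ k ∈ Finset.range n, z k) :=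
  strictMono_nat_of_lt_succ fun n => by
    rw [Finset.sum_range_succ]; exact lt_add_of_pos_right _ (hz n)

lemma rr_exists_m {z : ℕ → ℝ} (hz : ∀ k, 0 < z k)
    (htop : Tendsto (fun n => ∑ k ∈ Finset.range n, z k) atTop atTop)
    {t : ℝ} (ht : 0 ≤ t) :
    ∃ m : ℕ, ∀ n : ℕ, (∑ k ∈ Finset.range n, z k) ≤ t ↔ n ≤ m := by
  classical
  obtain ⟨n0, hn0⟩ := eventually_atTop.mp (htop.eventually_gt_atTop t)
  refine ⟨Nat.findGreatest (fun n => ∑ k ∈ Finset.range n, z k ≤ t) n0, fun n => ?_⟩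
  constructor
  · intro hn
    have hlt : n < n0 := by
      by_contra h
      exact absurd hn (not_le.mpr (hn0 n (le_of_not_gt h)))
    exact Nat.le_findGreatest hlt.le hn
  · intro hn
    have hm : ∑ k ∈ Finset.range
        (Nat.findGreatest (fun n => ∑ k ∈ Finset.range n, z k ≤ t) n0), z k ≤ t :=
      Nat.findGreatest_spec (P := fun n => ∑ k ∈ Finset.range n, z k ≤ t) (Nat.zero_le n0)
        (show ∑ k ∈ Finset.range 0, z k ≤ t by simpa using ht)
    exact le_trans ((rr_strictMono hz).monotone hn) hm

lemma rr_tsum_if {M : Type*} [AddCommMonoid M] [TopologicalSpace M] [T2Space M]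
    (m : ℕ) (r : ℕ → M) :
    ∑' n : ℕ, (if n ≤ m then r n else 0) = ∑ n ∈ Finset.range (m + 1), r n := by
  rw [tsum_eq_sum (s := Finset.range (m + 1))
    (fun n hn => if_neg (by simp only [Finset.mem_range] at hn; omega))]
  exact Finset.sum_congr rfl fun n hn => if_pos (by simp only [Finset.mem_range] at hn; omega)

lemma rr_tendsto_atTop {s : ℕ → ℝ} {c : ℝ} (hc : 0 < c)
    (h : Tendsto (fun n => s n / (n : ℝ)) atTop (nhds c)) : Tendsto s atTop atTop := by
  have h2 : ∀ᶠ n : ℕ in atTop, c / 2 < s n / n :=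
    h.eventually (eventually_gt_nhds (by linarith))
  have h3 : ∀ᶠ n : ℕ in atTop, c / 2 * n ≤ s n := by
    filter_upwards [h2, eventually_gt_atTop 0] with n hn hn0
    have hnpos : (0 : ℝ) < n := by exact_mod_cast hn0
    have h4 : c / 2 * n < s n / n * n := by nlinarith
    have h5 : s n / n * n = s n := by field_simp
    linarith
  exact tendsto_atTop_mono' _ h3
    (Tendsto.const_mul_atTop (by linarith) tendsto_natCast_atTop_atTop)

variable {Ω : Type*} [MeasurableSpace Ω] {P : Measure Ω} [IsProbabilityMeasure P]

lemma rr_indicator_integral {B : Set Ω} (hB : MeasurableSet B) {f : Ω → ℝ}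
    (hf : Integrable f P)
    (hI : IndepFun (B.indicator (fun _ => (1 : ℝ))) f P) :
    ∫ ω, B.indicator f ω ∂P = (P B).toReal * ∫ ω, f ω ∂P := by
  have h1 : ∀ ω, B.indicator f ω = B.indicator (fun _ => (1 : ℝ)) ω * f ω := by
    intro ω
    by_cases h : ω ∈ B <;> simp [Set.indicator, h]
  have h2 : Integrable (B.indicator (fun _ => (1 : ℝ))) P :=
    (integrable_const (1 : ℝ)).indicator hB
  calc ∫ ω, B.indicator f ω ∂P = ∫ ω, B.indicator (fun _ => (1 : ℝ)) ω * f ω ∂P := by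
        simp_rw [h1]
    _ = (∫ ω, B.indicator (fun _ => (1 : ℝ)) ω ∂P) * ∫ ω, f ω ∂P :=
        hI.integral_fun_mul_eq_mul_integral h2.aestronglyMeasurable hf.aestronglyMeasurable
    _ = (P B).toReal * ∫ ω, f ω ∂P := by
        rw [integral_indicator_const (1 : ℝ) hB]; simp [measureReal_def]

lemma rr_indicator_lintegral {B : Set Ω} (hB : MeasurableSet B) {f : Ω → ℝ}
    (hf : Integrable f P) (hf0 : ∀ ω, 0 ≤ f ω)
    (hI : IndepFun (B.indicator (fun _ => (1 : ℝ))) f P) :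
    ∫⁻ ω, B.indicator (fun ω => ENNReal.ofReal (f ω)) ω ∂P
      = ENNReal.ofReal (∫ ω, f ω ∂P) * P B := by
  rw [lintegral_indicator hB _]
  rw [← ofReal_integral_eq_lintegral_ofReal (hf.restrict (s := B))
    (Filter.Eventually.of_forall hf0)]
  rw [integral_indicator hB |>.symm]
  rw [rr_indicator_integral hB hf hI]
  rw [ENNReal.ofReal_mul ENNReal.toReal_nonneg, ENNReal.ofReal_toReal (measure_ne_top P B),
    mul_comm]

lemma rr_indic_comp {g : Ω → ℝ} (t : ℝ) :
    ({ω : Ω | g ω ≤ t}.indicator (fun _ => (1 : ℝ)))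
      = ((Set.Iic t).indicator (fun _ : ℝ => (1 : ℝ))) ∘ g := by
  funext ω
  by_cases h : g ω ≤ t <;> simp [Set.indicator, h]

lemma rr_wald {X : ℕ → Ω → ℝ} (hmeas : ∀ i, Measurable (X i))
    (hpos : ∀ i ω, 0 ≤ X i ω)
    (hint : Integrable (X 0) P) (hid : ∀ i, IdentDistrib (X i) (X 0) P P)
    (hindep : iIndepFun X P) (t : ℝ) :
    ∫⁻ ω, ∑' n : ℕ, ({ω' : Ω | (∑ k ∈ Finset.range n, X k ω') ≤ t}.indicator
        (fun ω' => ENNReal.ofReal (X n ω'))) ω ∂P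
      = ENNReal.ofReal (∫ ω, X 0 ω ∂P)
        * ∑' n : ℕ, P {ω | (∑ k ∈ Finset.range n, X k ω) ≤ t} := by
  have hsm : ∀ n, Measurable (fun ω => ∑ k ∈ Finset.range n, X k ω) := fun n =>
    Finset.measurable_sum _ fun i _ => hmeas i
  have hB : ∀ n, MeasurableSet {ω : Ω | (∑ k ∈ Finset.range n, X k ω) ≤ t} := fun n =>
    measurableSet_le (hsm n) measurable_const
  rw [lintegral_tsum (fun n => (((hmeas n).ennreal_ofReal).indicator (hB n)).aemeasurable)]
  rw [← ENNReal.tsum_mul_left]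
  refine tsum_congr fun n => ?_
  have hsum : IndepFun (fun ω => ∑ k ∈ Finset.range n, X k ω) (X n) P := by
    have h := hindep.indepFun_finsetSum_of_notMem hmeas (Finset.notMem_range_self (n := n))
    rwa [Finset.sum_fn] at h
  have hindic : IndepFun ({ω : Ω | (∑ k ∈ Finset.range n, X k ω) ≤ t}.indicator
      (fun _ => (1 : ℝ))) (X n) P := by
    rw [rr_indic_comp]
    exact hsum.comp (measurable_const.indicator measurableSet_Iic) measurable_id
  have hXn_int : Integrable (X n) P := (hid n).integrable_iff.mpr hint
  rw [rr_indicator_lintegral (hB n) hXn_int (hpos n) hindic, (hid n).integral_eq]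

end RRAux

/-- Renewal-reward theorem in expectation form. -/
theorem renewal_reward {Ω : Type*} [MeasurableSpace Ω] (P : Measure Ω)
    [IsProbabilityMeasure P]
    (Z R : ℕ → Ω → ℝ)
    (hZmeas : ∀ i, Measurable (Z i)) (hRmeas : ∀ i, Measurable (R i))
    (hZpos : ∀ i ω, 0 < Z i ω)
    (hZint : Integrable (Z 0) P) (hRint : Integrable (R 0) P)
    (hZmean : 0 < ∫ ω, Z 0 ω ∂P)
    (hZid : ∀ i, IdentDistrib (Z i) (Z 0) P P)
    (hRid : ∀ i, IdentDistrib (R i) (R 0) P P)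
    (hindep : iIndepFun (Sum.elim Z R) P)
    (Q : ℝ → Ω → ℕ)
    (hQ : ∀ t ω, Q t ω = Nat.card {i : ℕ | (∑ k ∈ Finset.range (i + 1), Z k ω) ≤ t})
    (S : ℝ → Ω → ℝ)
    (hS : ∀ t ω, S t ω = ∑ i ∈ Finset.range (Q t ω + 1), R i ω) :
    Tendsto (fun T : ℝ => (∫ ω, S T ω ∂P) / T) atTop
      (nhds ((∫ ω, R 0 ω ∂P) / (∫ ω, Z 0 ω ∂P))) := by
  classical
  set μZ := ∫ ω, Z 0 ω ∂P with hμZdef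
  set μR := ∫ ω, R 0 ω ∂P with hμRdef
  have hZint' : ∀ i, Integrable (Z i) P := fun i => (hZid i).integrable_iff.mpr hZint
  have hRint' : ∀ i, Integrable (R i) P := fun i => (hRid i).integrable_iff.mpr hRint
  have hmeasSum : ∀ i : ℕ ⊕ ℕ, Measurable (Sum.elim Z R i) := fun i => by
    cases i with
    | inl i => exact hZmeas i
    | inr i => exact hRmeas i
  -- independence of the Z family
  have hZindep : iIndepFun Z P := by
    rw [iIndepFun_iff_measure_inter_preimage_eq_mul]
    intro S' sets hsets
    have h := hindep.measure_inter_preimage_eq_mul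
      (S'.map ⟨Sum.inl, Sum.inl_injective⟩)
      (sets := Sum.elim sets fun _ => Set.univ) ?_
    · have e1 : (⋂ i ∈ S'.map ⟨Sum.inl, Sum.inl_injective⟩,
          Sum.elim Z R i ⁻¹' Sum.elim sets (fun _ => Set.univ) i)
          = ⋂ i ∈ S', Z i ⁻¹' sets i := by
        ext ω
        simp only [Set.mem_iInter, Finset.mem_map, Function.Embedding.coeFn_mk]
        constructor
        · intro h i hi
          exact h (Sum.inl i) ⟨i, hi, rfl⟩
        · rintro h j ⟨i, hi, rfl⟩
          exact h i hi
      rw [e1, Finset.prod_map] at h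
      exact h
    · rintro (i | i) hi
      · simp only [Sum.elim_inl]
        refine hsets i ?_
        simpa using hi
      · exact MeasurableSet.univ
  -- the truncated families
  have hZMmeas : ∀ (M : ℝ) i, Measurable (fun ω => min (Z i ω) M) := fun M i =>
    (hZmeas i).min measurable_const
  have hZMindep : ∀ M : ℝ, iIndepFun
      (fun i ω => min (Z i ω) M) P := fun M =>
    hZindep.comp (fun _ x => min x M) (fun _ => measurable_id.min measurable_const)
  have hZMid : ∀ (M : ℝ) i, IdentDistrib (fun ω => min (Z i ω) M)
      (fun ω => min (Z 0 ω) M) P P := fun M i =>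
    (hZid i).comp (measurable_id.min measurable_const)
  have hZMint : ∀ M : ℝ, Integrable (fun ω => min (Z 0 ω) M) P := by
    intro M
    refine Integrable.mono' (hZint.abs.add (integrable_const |M|))
      ((hZMmeas M 0).aestronglyMeasurable) (Filter.Eventually.of_forall fun ω => ?_)
    have := abs_min_le_max_abs_abs (a := Z 0 ω) (b := M)
    have h2 : max |Z 0 ω| |M| ≤ |Z 0 ω| + |M| :=
      max_le (le_add_of_nonneg_right (abs_nonneg _)) (le_add_of_nonneg_left (abs_nonneg _))
    calc ‖min (Z 0 ω) M‖ = |min (Z 0 ω) M| := rfl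
      _ ≤ max |Z 0 ω| |M| := abs_min_le_max_abs_abs
      _ ≤ |Z 0 ω| + |M| := h2
  -- almost sure divergence of partial sums
  have hgoodX : ∀ (X : ℕ → Ω → ℝ), (∀ i, Measurable (X i)) → Integrable (X 0) P →
      (∀ i, IdentDistrib (X i) (X 0) P P) →
      iIndepFun X P →
      0 < ∫ ω, X 0 ω ∂P →
      ∀ᵐ ω ∂P, Tendsto (fun n => ∑ k ∈ Finset.range n, X k ω) atTop atTop := by
    intro X hm hi hidX hindX hposX
    filter_upwards [strong_law_ae_real X hi (fun i j hij => hindX.indepFun hij) hidX] with ω hω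
    exact rr_tendsto_atTop hposX hω
  have hgood : ∀ᵐ ω ∂P, Tendsto (fun n => ∑ k ∈ Finset.range n, Z k ω) atTop atTop :=
    hgoodX Z hZmeas hZint hZid hZindep hZmean
  -- the renewal function
  set v : ℝ → ENNReal := fun t => ∑' n : ℕ, P {ω | (∑ k ∈ Finset.range n, Z k ω) ≤ t}
    with hvdef
  set μM : ℝ → ℝ := fun M => ∫ ω, min (Z 0 ω) M ∂P with hμMdef
  -- measurability of the basic events
  have hsm : ∀ n, Measurable (fun ω => ∑ k ∈ Finset.range n, Z k ω) := fun n =>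
    Finset.measurable_sum _ fun i _ => hZmeas i
  have hB : ∀ (n : ℕ) (t : ℝ),
      MeasurableSet {ω : Ω | (∑ k ∈ Finset.range n, Z k ω) ≤ t} := fun n t =>
    measurableSet_le (hsm n) measurable_const
  -- lower Wald bound
  have hlow : ∀ t : ℝ, 0 ≤ t → ENNReal.ofReal t ≤ ENNReal.ofReal μZ * v t := by
    intro t ht
    have hW := rr_wald (P := P) hZmeas (fun i ω => (hZpos i ω).le) hZint hZid hZindep t
    have hae : ∀ᵐ ω ∂P, ENNReal.ofReal t ≤ ∑' n : ℕ,
        ({ω' : Ω | (∑ k ∈ Finset.range n, Z k ω') ≤ t}.indicator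
          (fun ω' => ENNReal.ofReal (Z n ω'))) ω := by
      filter_upwards [hgood] with ω hω
      obtain ⟨m, hm⟩ := rr_exists_m (fun k => hZpos k ω) hω ht
      have h1 : ∀ n : ℕ, ({ω' : Ω | (∑ k ∈ Finset.range n, Z k ω') ≤ t}.indicator
          (fun ω' => ENNReal.ofReal (Z n ω'))) ω
          = if n ≤ m then ENNReal.ofReal (Z n ω) else 0 := by
        intro n
        simp only [Set.indicator_apply, Set.mem_setOf_eq]
        by_cases h : n ≤ m
        · rw [if_pos ((hm n).mpr h), if_pos h]
        · rw [if_neg (fun hc => h ((hm n).mp hc)), if_neg h]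
      have h2 : t < ∑ k ∈ Finset.range (m + 1), Z k ω := by
        by_contra hc
        have := (hm (m + 1)).mp (le_of_not_gt hc)
        omega
      calc ENNReal.ofReal t ≤ ENNReal.ofReal (∑ k ∈ Finset.range (m + 1), Z k ω) :=
            ENNReal.ofReal_le_ofReal h2.le
        _ = ∑ k ∈ Finset.range (m + 1), ENNReal.ofReal (Z k ω) :=
            ENNReal.ofReal_sum_of_nonneg (fun k _ => (hZpos k ω).le)
        _ = ∑' n : ℕ, (if n ≤ m then ENNReal.ofReal (Z n ω) else 0) :=
            (rr_tsum_if m _).symm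
        _ = _ := tsum_congr fun n => (h1 n).symm
    calc ENNReal.ofReal t = ∫⁻ _, ENNReal.ofReal t ∂P := by simp
      _ ≤ ∫⁻ ω, ∑' n : ℕ, ({ω' : Ω | (∑ k ∈ Finset.range n, Z k ω') ≤ t}.indicator
            (fun ω' => ENNReal.ofReal (Z n ω'))) ω ∂P := lintegral_mono_ae hae
      _ = ENNReal.ofReal μZ * v t := hW
  -- upper Wald bound with truncation
  have hup : ∀ M : ℝ, 0 < M → 0 < μM M → ∀ t : ℝ, 0 ≤ t →
      ENNReal.ofReal (μM M) * v t ≤ ENNReal.ofReal (t + M) := by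
    intro M hM hμMpos t ht
    have hWM := rr_wald (P := P) (hZMmeas M)
      (fun i ω => le_min (hZpos i ω).le hM.le) (hZMint M) (hZMid M) (hZMindep M) t
    have hmono : v t ≤ ∑' n : ℕ, P {ω | (∑ k ∈ Finset.range n, min (Z k ω) M) ≤ t} := by
      refine ENNReal.tsum_le_tsum fun n => measure_mono fun ω h => ?_
      simp only [Set.mem_setOf_eq] at h ⊢
      calc ∑ k ∈ Finset.range n, min (Z k ω) M ≤ ∑ k ∈ Finset.range n, Z k ω :=
            Finset.sum_le_sum fun k _ => min_le_left _ _
        _ ≤ t := h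
    have hgoodM : ∀ᵐ ω ∂P, Tendsto (fun n => ∑ k ∈ Finset.range n, min (Z k ω) M)
        atTop atTop :=
      hgoodX _ (hZMmeas M) (hZMint M) (hZMid M) (hZMindep M) hμMpos
    have hae : ∀ᵐ ω ∂P, (∑' n : ℕ,
        ({ω' : Ω | (∑ k ∈ Finset.range n, min (Z k ω') M) ≤ t}.indicator
          (fun ω' => ENNReal.ofReal (min (Z n ω') M))) ω) ≤ ENNReal.ofReal (t + M) := by
      filter_upwards [hgoodM] with ω hω
      obtain ⟨m, hm⟩ := rr_exists_m (fun k => lt_min (hZpos k ω) hM) hω ht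
      have h1 : ∀ n : ℕ,
          ({ω' : Ω | (∑ k ∈ Finset.range n, min (Z k ω') M) ≤ t}.indicator
            (fun ω' => ENNReal.ofReal (min (Z n ω') M))) ω
          = if n ≤ m then ENNReal.ofReal (min (Z n ω) M) else 0 := by
        intro n
        simp only [Set.indicator_apply, Set.mem_setOf_eq]
        by_cases h : n ≤ m
        · rw [if_pos ((hm n).mpr h), if_pos h]
        · rw [if_neg (fun hc => h ((hm n).mp hc)), if_neg h]
      have h2 : ∑ k ∈ Finset.range (m + 1), min (Z k ω) M ≤ t + M := by
        rw [Finset.sum_range_succ]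
        have h3 : ∑ k ∈ Finset.range m, min (Z k ω) M ≤ t := (hm m).mpr le_rfl
        have h4 : min (Z m ω) M ≤ M := min_le_right _ _
        linarith
      calc (∑' n : ℕ, ({ω' : Ω | (∑ k ∈ Finset.range n, min (Z k ω') M) ≤ t}.indicator
            (fun ω' => ENNReal.ofReal (min (Z n ω') M))) ω)
          = ∑' n : ℕ, (if n ≤ m then ENNReal.ofReal (min (Z n ω) M) else 0) :=
            tsum_congr h1
        _ = ∑ k ∈ Finset.range (m + 1), ENNReal.ofReal (min (Z k ω) M) := rr_tsum_if m _
        _ = ENNReal.ofReal (∑ k ∈ Finset.range (m + 1), min (Z k ω) M) :=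
            (ENNReal.ofReal_sum_of_nonneg (fun k _ => le_min (hZpos k ω).le hM.le)).symm
        _ ≤ ENNReal.ofReal (t + M) := ENNReal.ofReal_le_ofReal h2
    calc ENNReal.ofReal (μM M) * v t
        ≤ ENNReal.ofReal (μM M)
          * ∑' n : ℕ, P {ω | (∑ k ∈ Finset.range n, min (Z k ω) M) ≤ t} :=
          mul_le_mul_right hmono _
      _ = ∫⁻ ω, ∑' n : ℕ,
            ({ω' : Ω | (∑ k ∈ Finset.range n, min (Z k ω') M) ≤ t}.indicator
              (fun ω' => ENNReal.ofReal (min (Z n ω') M))) ω ∂P := hWM.symm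
      _ ≤ ∫⁻ _, ENNReal.ofReal (t + M) ∂P := lintegral_mono_ae hae
      _ = ENNReal.ofReal (t + M) := by simp
  -- convergence of truncated means
  have hconv : Tendsto (fun n : ℕ => μM n) atTop (nhds μZ) := by
    refine tendsto_integral_of_dominated_convergence (fun ω => |Z 0 ω|)
      (fun n => ((hZmeas 0).min measurable_const).aestronglyMeasurable)
      hZint.abs (fun n => Filter.Eventually.of_forall fun ω => ?_)
      (Filter.Eventually.of_forall fun ω => ?_)
    · have h1 : (0 : ℝ) ≤ min (Z 0 ω) n := le_min (hZpos 0 ω).le (Nat.cast_nonneg n)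
      show ‖min (Z 0 ω) (n : ℝ)‖ ≤ |Z 0 ω|
      rw [Real.norm_eq_abs, abs_of_nonneg h1, abs_of_pos (hZpos 0 ω)]
      exact min_le_left _ _
    · refine Tendsto.congr' ?_ tendsto_const_nhds
      filter_upwards [eventually_ge_atTop ⌈Z 0 ω⌉₊] with n hn
      exact (min_eq_left ((Nat.le_ceil _).trans (by exact_mod_cast hn))).symm
  -- a fixed truncation level ensuring finiteness
  obtain ⟨M0n, hM0⟩ := (hconv.eventually (eventually_gt_nhds (half_lt_self hZmean))).and
    (eventually_ge_atTop 1) |>.exists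
  have hM0pos : (0 : ℝ) < M0n := by exact_mod_cast lt_of_lt_of_le one_pos hM0.2
  have hμM0pos : 0 < μM M0n := lt_trans (half_pos hZmean) hM0.1
  have hvfin : ∀ t : ℝ, 0 ≤ t → v t ≠ ⊤ := by
    intro t ht hc
    have h := hup M0n hM0pos hμM0pos t ht
    rw [hc, ENNReal.mul_top (by simp [hμM0pos, hμM0pos.not_ge] )] at h
    exact (lt_irrefl ⊤ (lt_of_le_of_lt h (ENNReal.ofReal_lt_top))).elim
  -- real versions of the bounds
  have hlowR : ∀ t : ℝ, 0 ≤ t → t ≤ μZ * (v t).toReal := by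
    intro t ht
    have h := hlow t ht
    have h2 := ENNReal.toReal_mono
      (ENNReal.mul_ne_top ENNReal.ofReal_ne_top (hvfin t ht)) h
    rwa [ENNReal.toReal_ofReal ht, ENNReal.toReal_mul,
      ENNReal.toReal_ofReal hZmean.le] at h2
  have hupR : ∀ M : ℝ, 0 < M → 0 < μM M → ∀ t : ℝ, 0 ≤ t →
      μM M * (v t).toReal ≤ t + M := by
    intro M hM hμMpos t ht
    have h := hup M hM hμMpos t ht
    have h2 := ENNReal.toReal_mono ENNReal.ofReal_ne_top h
    rwa [ENNReal.toReal_ofReal (by linarith), ENNReal.toReal_mul,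
      ENNReal.toReal_ofReal hμMpos.le] at h2
  -- independence of the indicator events from the rewards
  have hRindic : ∀ (n : ℕ) (t : ℝ),
      IndepFun ({ω : Ω | (∑ k ∈ Finset.range n, Z k ω) ≤ t}.indicator
        (fun _ => (1 : ℝ))) (R n) P := by
    intro n t
    have h := hindep.indepFun_finsetSum_of_notMem hmeasSum
      (s := (Finset.range n).map ⟨Sum.inl, Sum.inl_injective⟩) (i := Sum.inr n) (by simp)
    have e : (∑ j ∈ (Finset.range n).map ⟨Sum.inl, Sum.inl_injective⟩, Sum.elim Z R j)
        = fun ω => ∑ k ∈ Finset.range n, Z k ω := by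
      rw [Finset.sum_map, Finset.sum_fn]
      rfl
    rw [e] at h
    rw [rr_indic_comp]
    exact h.comp (measurable_const.indicator measurableSet_Iic) measurable_id
  -- the expected reward identity
  have hSint : ∀ t : ℝ, 0 ≤ t → ∫ ω, S t ω ∂P = μR * (v t).toReal := by
    intro t ht
    have hae : ∀ᵐ ω ∂P, S t ω = ∑' n : ℕ,
        ({ω' : Ω | (∑ k ∈ Finset.range n, Z k ω') ≤ t}.indicator (R n)) ω := by
      filter_upwards [hgood] with ω hω
      obtain ⟨m, hm⟩ := rr_exists_m (fun k => hZpos k ω) hω ht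
      have hQω : Q t ω = m := by
        rw [hQ]
        have hset : {i : ℕ | (∑ k ∈ Finset.range (i + 1), Z k ω) ≤ t}
            = ↑(Finset.range m) := by
          ext i
          simp only [Set.mem_setOf_eq, Finset.coe_range, Set.mem_Iio]
          rw [hm (i + 1)]
          omega
        rw [hset, Nat.card_coe_set_eq, Set.ncard_coe_finset, Finset.card_range]
      have h1 : ∀ n : ℕ, ({ω' : Ω | (∑ k ∈ Finset.range n, Z k ω') ≤ t}.indicator (R n)) ω
          = if n ≤ m then R n ω else 0 := by
        intro n
        simp only [Set.indicator_apply, Set.mem_setOf_eq]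
        by_cases h : n ≤ m
        · rw [if_pos ((hm n).mpr h), if_pos h]
        · rw [if_neg (fun hc => h ((hm n).mp hc)), if_neg h]
      rw [hS, hQω]
      exact ((tsum_congr h1).trans (rr_tsum_if m fun n => R n ω)).symm
    rw [integral_congr_ae hae]
    have hnormval : ∀ n : ℕ, (∫⁻ ω, ‖({ω' : Ω | (∑ k ∈ Finset.range n, Z k ω') ≤ t}.indicator
        (R n)) ω‖₊ ∂P)
        = ENNReal.ofReal (∫ ω, |R 0 ω| ∂P)
          * P {ω | (∑ k ∈ Finset.range n, Z k ω) ≤ t} := by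
      intro n
      have heq : ∀ ω : Ω, (‖({ω' : Ω | (∑ k ∈ Finset.range n, Z k ω') ≤ t}.indicator
          (R n)) ω‖₊ : ENNReal)
          = ({ω' : Ω | (∑ k ∈ Finset.range n, Z k ω') ≤ t}.indicator
            (fun ω' => ENNReal.ofReal (|R n ω'|))) ω := by
        intro ω
        simp only [Set.indicator_apply]
        by_cases h : ω ∈ {ω' : Ω | (∑ k ∈ Finset.range n, Z k ω') ≤ t}
        · rw [if_pos h, if_pos h, ← enorm_eq_nnnorm, ← ofReal_norm, Real.norm_eq_abs]
        · rw [if_neg h, if_neg h]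
          simp
      simp_rw [heq]
      have habs : IndepFun ({ω : Ω | (∑ k ∈ Finset.range n, Z k ω) ≤ t}.indicator
          (fun _ => (1 : ℝ))) (fun ω => |R n ω|) P :=
        (hRindic n t).comp measurable_id (continuous_abs.measurable)
      rw [rr_indicator_lintegral (hB n t) (hRint' n).abs (fun ω => abs_nonneg _) habs]
      congr 1
      exact congrArg ENNReal.ofReal (((hRid n).comp continuous_abs.measurable).integral_eq)
    have hnorm : (∑' n : ℕ, ∫⁻ ω, ‖({ω' : Ω | (∑ k ∈ Finset.range n, Z k ω') ≤ t}.indicator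
        (R n)) ω‖₊ ∂P) ≠ ⊤ := by
      rw [tsum_congr hnormval, ENNReal.tsum_mul_left]
      exact ENNReal.mul_ne_top ENNReal.ofReal_ne_top (hvfin t ht)
    rw [integral_tsum (fun n => ((hRmeas n).indicator (hB n t)).aestronglyMeasurable) hnorm]
    have hterm : ∀ n : ℕ, (∫ ω, ({ω' : Ω | (∑ k ∈ Finset.range n, Z k ω') ≤ t}.indicator
        (R n)) ω ∂P)
        = μR * (P {ω | (∑ k ∈ Finset.range n, Z k ω) ≤ t}).toReal := by
      intro n
      rw [rr_indicator_integral (hB n t) (hRint' n) (hRindic n t), (hRid n).integral_eq]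
      ring
    rw [tsum_congr hterm, tsum_mul_left]
    congr 1
    rw [hvdef]
    exact (ENNReal.tsum_toReal_eq fun n => measure_ne_top P _).symm
  -- the elementary renewal limit
  have hμZne : μZ ≠ 0 := ne_of_gt hZmean
  have hconvinv : Tendsto (fun n : ℕ => (μM n)⁻¹) atTop (nhds μZ⁻¹) := hconv.inv₀ hμZne
  have key : Tendsto (fun t : ℝ => (v t).toReal / t) atTop (nhds μZ⁻¹) := by
    rw [Metric.tendsto_atTop]
    intro ε hε
    have hev : ∀ᶠ n : ℕ in atTop, 0 < μM n ∧ (μM n)⁻¹ < μZ⁻¹ + ε / 2 ∧ (1 : ℝ) ≤ n := by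
      filter_upwards [hconv.eventually (eventually_gt_nhds (half_lt_self hZmean)),
        hconvinv.eventually (eventually_lt_nhds (show μZ⁻¹ < μZ⁻¹ + ε / 2 by linarith)),
        eventually_ge_atTop 1] with n h1 h2 h3
      exact ⟨lt_trans (half_pos hZmean) h1, h2, by exact_mod_cast h3⟩
    obtain ⟨N0, hN0⟩ := hev.exists
    set M : ℝ := (N0 : ℝ) with hMdef
    have hMpos : 0 < M := lt_of_lt_of_le one_pos hN0.2.2
    have hμMpos : 0 < μM M := hN0.1
    refine ⟨max 1 (4 * M / (μM M * ε)), fun t htN => ?_⟩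
    have ht1 : (1 : ℝ) ≤ t := le_trans (le_max_left _ _) htN
    have htpos : (0 : ℝ) < t := lt_of_lt_of_le one_pos ht1
    have hl := hlowR t htpos.le
    have hu := hupR M hMpos hμMpos t htpos.le
    set x := (v t).toReal with hxdef
    have hlow2 : μZ⁻¹ ≤ x / t := by
      rw [le_div_iff₀ htpos]
      have h7 : μZ⁻¹ * (μZ * x) = x := by field_simp
      calc μZ⁻¹ * t ≤ μZ⁻¹ * (μZ * x) :=
            mul_le_mul_of_nonneg_left hl (inv_nonneg.mpr hZmean.le)
        _ = x := h7
    have hup2 : x / t ≤ (μM M)⁻¹ + (μM M)⁻¹ * (M / t) := by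
      have h8 : x ≤ (t + M) / μM M := by
        rw [le_div_iff₀ hμMpos]
        calc x * μM M = μM M * x := mul_comm _ _
          _ ≤ t + M := hu
      calc x / t ≤ ((t + M) / μM M) / t := by
            gcongr
        _ = (μM M)⁻¹ + (μM M)⁻¹ * (M / t) := by
            field_simp
    have hsmall : (μM M)⁻¹ * (M / t) ≤ ε / 4 := by
      have h9 : 4 * M / (μM M * ε) ≤ t := le_trans (le_max_right _ _) htN
      have h10 : 4 * M ≤ t * (μM M * ε) := by
        rw [div_le_iff₀ (by positivity)] at h9
        linarith
      have h11 : M / t ≤ μM M * ε / 4 := by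
        rw [div_le_iff₀ htpos]
        calc M ≤ t * (μM M * ε) / 4 := by linarith
          _ = μM M * ε / 4 * t := by ring
      calc (μM M)⁻¹ * (M / t) ≤ (μM M)⁻¹ * (μM M * ε / 4) :=
            mul_le_mul_of_nonneg_left h11 (inv_nonneg.mpr hμMpos.le)
        _ = ε / 4 := by
            field_simp
    have hfin : x / t < μZ⁻¹ + ε := by
      have h12 := hN0.2.1
      linarith [hup2, hsmall]
    rw [Real.dist_eq, abs_of_nonneg (by linarith [hlow2])]
    linarith
  -- conclusion
  rw [div_eq_mul_inv μR μZ]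
  refine Tendsto.congr' ?_ (key.const_mul μR)
  filter_upwards [eventually_ge_atTop (0 : ℝ)] with T hT
  rw [hSint T hT, mul_div_assoc]
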